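/- For each k with 1 ≤ k ≤ p, the k-th iterated antiderivative of the right Radau polynomial vanishes at ξ = 1: R⁻⁽⁻ᵏ⁾_{p+1}(1) = (1/(k-1)!) ∫_{-1}^1 (1-s)^{k-1} R⁻_{p+1}(s) ds = 0. -/
import Mathlib
open Polynomial intervalIntegral

noncomputable def pint (f : Polynomial ℝ) : Polynomial ℝ :=
  f.sum fun n a => C (a / (n+1)) * X^(n+1)

lemma derivative_pint (f : Polynomial ℝ) : derivative (pint f) = f := by
  conv_rhs => rw [← Polynomial.sum_C_mul_X_pow_eq f]
  rw [pint, Polynomial.sum, Polynomial.sum, map_sum]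
  refine Finset.sum_congr rfl fun n _ => ?_
  rw [derivative_C_mul, derivative_X_pow]
  simp only [Nat.add_sub_cancel, Nat.cast_add, Nat.cast_one, ← C_eq_natCast]
  rw [← mul_assoc, ← map_mul]
  congr 2
  have : ((n:ℝ)+1) ≠ 0 := by positivity
  field_simp

lemma natDegree_pint_le (f : Polynomial ℝ) : (pint f).natDegree ≤ f.natDegree + 1 := by
  refine (Polynomial.natDegree_sum_le_of_forall_le _ _ fun n hn => ?_)
  calc (C (f.coeff n / (n+1)) * X^(n+1)).natDegree ≤ (X^(n+1) : Polynomial ℝ).natDegree := by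
        exact natDegree_C_mul_le (f.coeff n / (n+1)) (X^(n+1))
    _ = n + 1 := natDegree_X_pow _
    _ ≤ f.natDegree + 1 := by
        exact Nat.succ_le_succ (Polynomial.le_natDegree_of_mem_supp n hn)

lemma poly_intble (f : Polynomial ℝ) (a b : ℝ) :
    IntervalIntegrable (fun s => f.eval s) MeasureTheory.volume a b :=
  f.continuous.intervalIntegrable a b

lemma integral_poly (f : Polynomial ℝ) (a b : ℝ) :
    ∫ s in a..b, f.eval s = (pint f).eval b - (pint f).eval a := by
  refine integral_eq_sub_of_hasDerivAt (f := fun x => (pint f).eval x) (fun x _ => ?_) (poly_intble f a b)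
  have := (pint f).hasDerivAt x
  rwa [derivative_pint] at this

lemma poly_ibp (f g : Polynomial ℝ) :
    ∫ s in (-1:ℝ)..1, f.eval s * (derivative g).eval s
      = f.eval 1 * g.eval 1 - f.eval (-1) * g.eval (-1)
        - ∫ s in (-1:ℝ)..1, (derivative f).eval s * g.eval s :=
  integral_mul_deriv_eq_deriv_mul (fun x _ => f.hasDerivAt x) (fun x _ => g.hasDerivAt x)
    (poly_intble _ _ _) (poly_intble _ _ _)

/-- The `k`-th Legendre polynomial, defined via the Rodrigues formula. -/
noncomputable def leg (k : ℕ) : Polynomial ℝ :=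
  C (1 / (2 ^ k * (k.factorial : ℝ))) * (fun q => derivative q)^[k] ((X ^ 2 - 1) ^ k)

/-- The right Radau polynomial `R⁻_{p+1} = P_{p+1} - P_p`. -/
noncomputable def radau (p : ℕ) : Polynomial ℝ := leg (p + 1) - leg p

/-- Iterated antiderivatives of the right Radau polynomial, with base point `-1`. -/
noncomputable def radauIter (p : ℕ) : ℕ → ℝ → ℝ
  | 0 => fun ξ => (radau p).eval ξ
  | (k + 1) => fun ξ => ∫ s in (-1 : ℝ)..ξ, radauIter p k s


lemma iterate_deriv_dvd (n j : ℕ) (hj : j ≤ n) :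
    ∃ g : Polynomial ℝ, (fun q => derivative q)^[j] ((X ^ 2 - 1) ^ n)
      = (X ^ 2 - 1) ^ (n - j) * g := by
  induction j with
  | zero => exact ⟨1, by simp⟩
  | succ j ih =>
    obtain ⟨g, hg⟩ := ih (Nat.le_of_succ_le hj)
    obtain ⟨m, hm⟩ : ∃ m, n - j = m + 1 := ⟨n - (j+1), by omega⟩
    refine ⟨C ((m:ℝ)+1) * derivative (X^2-1) * g + (X^2-1) * derivative g, ?_⟩
    rw [Function.iterate_succ_apply', hg, hm, show n - (j+1) = m by omega]
    rw [derivative_mul, derivative_pow]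
    push_cast
    ring

lemma iterate_deriv_eval_zero (n j : ℕ) (hj : j < n) (x : ℝ) (hx : x ^ 2 = 1) :
    ((fun q => derivative q)^[j] ((X ^ 2 - 1) ^ n)).eval x = 0 := by
  obtain ⟨g, hg⟩ := iterate_deriv_dvd n j hj.le
  rw [hg, eval_mul, eval_pow, eval_sub, eval_pow, eval_one, eval_X, hx, sub_self,
    zero_pow (by omega), zero_mul]

lemma integral_mul_iter (n : ℕ) (q : Polynomial ℝ) (j : ℕ) (hj : j ≤ n) :
    ∫ s in (-1:ℝ)..1, q.eval s * ((fun r => derivative r)^[n] ((X^2-1)^n)).eval s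
      = (-1)^j * ∫ s in (-1:ℝ)..1,
          ((fun r => derivative r)^[j] q).eval s
            * ((fun r => derivative r)^[n-j] ((X^2-1)^n)).eval s := by
  induction j with
  | zero => simp
  | succ j ih =>
    rw [ih (Nat.le_of_succ_le hj)]
    obtain ⟨m, hm⟩ : ∃ m, n - j = m + 1 := ⟨n - (j+1), by omega⟩
    rw [hm, Function.iterate_succ_apply', poly_ibp]
    rw [iterate_deriv_eval_zero n m (by omega) 1 (by norm_num),
      iterate_deriv_eval_zero n m (by omega) (-1) (by norm_num)]
    rw [show derivative ((fun r => derivative r)^[j] q) = (fun r => derivative r)^[j+1] q from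
      (Function.iterate_succ_apply' (fun r => derivative r) j q).symm,
      show n - (j+1) = m by omega]
    ring

lemma ortho_leg (n : ℕ) (q : Polynomial ℝ) (hq : q.natDegree < n) :
    ∫ s in (-1:ℝ)..1, q.eval s * (leg n).eval s = 0 := by
  have key := integral_mul_iter n q n le_rfl
  rw [Polynomial.iterate_derivative_eq_zero hq] at key
  simp only [eval_zero, zero_mul, integral_zero, mul_zero, Nat.sub_self,
    Function.iterate_zero_apply] at key
  unfold leg
  simp only [eval_mul, eval_C]
  calc ∫ s in (-1:ℝ)..1, q.eval s * (1 / (2 ^ n * (n.factorial : ℝ))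
        * ((fun r => derivative r)^[n] ((X^2-1)^n)).eval s)
      = (1 / (2 ^ n * (n.factorial : ℝ))) * ∫ s in (-1:ℝ)..1,
          q.eval s * ((fun r => derivative r)^[n] ((X^2-1)^n)).eval s := by
        rw [← intervalIntegral.integral_const_mul]
        congr 1; funext s; ring
    _ = 0 := by rw [key, mul_zero]


lemma ortho_radau (p : ℕ) (q : Polynomial ℝ) (hq : q.natDegree < p) :
    ∫ s in (-1:ℝ)..1, q.eval s * (radau p).eval s = 0 := by
  have h1 := ortho_leg (p+1) q (hq.trans (Nat.lt_succ_self p))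
  have h2 := ortho_leg p q hq
  calc ∫ s in (-1:ℝ)..1, q.eval s * (radau p).eval s
      = (∫ s in (-1:ℝ)..1, q.eval s * (leg (p+1)).eval s)
        - ∫ s in (-1:ℝ)..1, q.eval s * (leg p).eval s := by
        rw [← intervalIntegral.integral_sub]
        · congr 1; funext s; rw [radau, eval_sub]; ring
        · simpa only [eval_mul] using poly_intble (q * leg (p+1)) (-1) 1
        · simpa only [eval_mul] using poly_intble (q * leg p) (-1) 1
    _ = 0 := by rw [h1, h2, sub_zero]

noncomputable def B (p : ℕ) : ℕ → Polynomial ℝ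
  | 0 => radau p
  | (k+1) => pint (B p k) - C ((pint (B p k)).eval (-1))

lemma radauIter_eq (p k : ℕ) (ξ : ℝ) : radauIter p k ξ = (B p k).eval ξ := by
  induction k generalizing ξ with
  | zero => rfl
  | succ k ih =>
    show (∫ s in (-1:ℝ)..ξ, radauIter p k s) = _
    rw [intervalIntegral.integral_congr (g := fun s => (B p k).eval s) fun s _ => ih s,
      integral_poly, B]
    simp

lemma integral_B (p k : ℕ) : ∫ s in (-1:ℝ)..1, (B p k).eval s = (B p (k+1)).eval 1 := by
  rw [integral_poly, B]; simp

lemma ortho_B (p : ℕ) : ∀ m, ∀ q : Polynomial ℝ, q.natDegree + m + 1 ≤ p →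
    ∫ s in (-1:ℝ)..1, q.eval s * (B p m).eval s = 0 := by
  intro m
  induction m with
  | zero => exact fun q h => ortho_radau p q (by omega)
  | succ m ih =>
    intro q h
    have hB1 : (B p (m+1)).eval 1 = 0 := by
      rw [← integral_B]
      have := ih 1 (by simpa using (by omega : 0 + m + 1 ≤ p))
      simpa using this
    have hBm1 : (B p (m+1)).eval (-1) = 0 := by rw [B]; simp
    have hder : derivative (B p (m+1)) = B p m := by
      rw [B, derivative_sub, derivative_C, sub_zero, derivative_pint]
    have hq' : (pint q).natDegree + m + 1 ≤ p := by
      have := natDegree_pint_le q; omega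
    have ibp := poly_ibp (B p (m+1)) (pint q)
    rw [derivative_pint, hder, hB1, hBm1] at ibp
    have hmm : ∫ s in (-1:ℝ)..1, (B p m).eval s * (pint q).eval s = 0 := by
      rw [intervalIntegral.integral_congr
        (g := fun s => (pint q).eval s * (B p m).eval s) fun s _ => mul_comm _ _]
      exact ih (pint q) hq'
    rw [hmm] at ibp
    rw [intervalIntegral.integral_congr
      (g := fun s => (B p (m+1)).eval s * q.eval s) fun s _ => mul_comm _ _, ibp]
    ring

theorem radauIter_eval_one_eq_zero (p k : ℕ) (hk1 : 1 ≤ k) (hkp : k ≤ p) :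
    radauIter p k 1 = 0 ∧
      (1 / ((k - 1).factorial : ℝ)) *
          (∫ s in (-1 : ℝ)..1, (1 - s) ^ (k - 1) * (radau p).eval s) = 0 := by
  obtain ⟨m, rfl⟩ : ∃ m, k = m + 1 := ⟨k - 1, by omega⟩
  constructor
  · rw [radauIter_eq, ← integral_B]
    have := ortho_B p m 1 (by simpa using (by omega : 0 + m + 1 ≤ p))
    simpa using this
  · have hdeg : ((1 - X : Polynomial ℝ) ^ m).natDegree < p := by
      have h1 : ((1 - X : Polynomial ℝ) ^ m).natDegree ≤ m * (1 - X : Polynomial ℝ).natDegree :=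
        natDegree_pow_le
      have h2 : (1 - X : Polynomial ℝ).natDegree ≤ 1 := by
        apply (natDegree_sub_le _ _).trans; simp
      have := h1.trans (Nat.mul_le_mul_left m h2)
      omega
    have key := ortho_radau p ((1 - X) ^ m) hdeg
    rw [Nat.add_sub_cancel]
    rw [intervalIntegral.integral_congr
      (g := fun s => ((1 - X : Polynomial ℝ) ^ m).eval s * (radau p).eval s)
      (by intro s _; simp), key, mul_zero]
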